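/- arXiv:2110.05049 — 3 statements merged into one kernel-verified Lean document; each statement's English description precedes it below -/
import Mathlib

section
/- Let (S,d) be a separable metric space, let (Ω,𝔉,ℙ) be a probability space, let (μ_n)_{n≥1} be a sequence of random Borel probability measures on S (i.e. measurable maps from Ω to the space of Borel probability measures on S equipped with the Borel σ-algebra of the topology of weak convergence), and let μ be a deterministic Borel probability measure on S. Then the following are equivalent: (1) the distance from μ_n to μ, in a metric metrising weak convergence of probability measures on S (concretely, the Lévy–Prokhorov distance), converges to 0 in probability as n → ∞; (2) for every bounded continuous function f : S → ℝ, the random variable ∫_S f dμ_n converges in probability to ∫_S f dμ as n → ∞. -/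
open MeasureTheory Filter Topology BoundedContinuousFunction

section aux

variable {S : Type*} [MetricSpace S] [TopologicalSpace.SeparableSpace S]
    [MeasurableSpace S] [BorelSpace S]

/-- The filter of "finitely many integral conditions" at `μ` is finer than `𝓝 μ`. -/
lemma fv_aux_iInf_le_nhds (μ : ProbabilityMeasure S) :
    (⨅ f : S →ᵇ ℝ, Filter.comap
        (fun ν : ProbabilityMeasure S => ∫ x, f x ∂(ν : Measure S))
        (𝓝 (∫ x, f x ∂(μ : Measure S)))) ≤ 𝓝 μ := by
  rw [← tendsto_id']
  apply ProbabilityMeasure.tendsto_iff_forall_integral_tendsto.mpr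
  intro f
  exact tendsto_comap.mono_left (iInf_le _ f)

/-- For every `ε > 0` there are finitely many test functions and positive radii such that
closeness of all their integrals forces LP-distance less than `ε`. -/
lemma fv_aux_exists_finset (μ : ProbabilityMeasure S) {ε : ℝ} (hε : 0 < ε) :
    ∃ (t : Finset (S →ᵇ ℝ)) (δ : (S →ᵇ ℝ) → ℝ), (∀ f ∈ t, 0 < δ f) ∧
      ∀ ν : ProbabilityMeasure S,
        (∀ f ∈ t, |(∫ x, f x ∂(ν : Measure S)) - ∫ x, f x ∂(μ : Measure S)| < δ f) →
        levyProkhorovDist (ν : Measure S) (μ : Measure S) < ε := by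
  have hU : {ν : ProbabilityMeasure S |
      levyProkhorovDist (ν : Measure S) (μ : Measure S) < ε} ∈ 𝓝 μ := by
    have : IsOpen {ν : ProbabilityMeasure S |
        levyProkhorovDist (ν : Measure S) (μ : Measure S) < ε} := by
      have : {ν : ProbabilityMeasure S |
          levyProkhorovDist (ν : Measure S) (μ : Measure S) < ε}
          = (fun ν : ProbabilityMeasure S =>
              dist (LevyProkhorov.probabilityMeasureHomeomorph ν)
                (LevyProkhorov.probabilityMeasureHomeomorph μ)) ⁻¹' Set.Iio ε := rfl
      rw [this]
      exact (Continuous.dist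
        LevyProkhorov.probabilityMeasureHomeomorph.continuous continuous_const).isOpen_preimage
        _ isOpen_Iio
    exact this.mem_nhds (by simpa [levyProkhorovDist_self] using hε)
  have hmem := fv_aux_iInf_le_nhds μ hU
  rw [Filter.mem_iInf] at hmem
  obtain ⟨I, hIfin, V, hV, hEq⟩ := hmem
  -- each V i comes from a metric ball
  have hball : ∀ i : I, ∃ δ > 0, ∀ ν : ProbabilityMeasure S,
      |(∫ x, (i : S →ᵇ ℝ) x ∂(ν : Measure S)) - ∫ x, (i : S →ᵇ ℝ) x ∂(μ : Measure S)| < δ →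
      ν ∈ V i := by
    intro i
    obtain ⟨W, hW, hWsub⟩ := Filter.mem_comap.mp (hV i)
    obtain ⟨δ, hδ, hballW⟩ := Metric.mem_nhds_iff.mp hW
    refine ⟨δ, hδ, fun ν hν => hWsub ?_⟩
    exact Set.mem_preimage.mpr (hballW (by rwa [Metric.mem_ball, Real.dist_eq]))
  choose δ0 hδ0 hδimp using hball
  classical
  refine ⟨hIfin.toFinset, fun f => if h : f ∈ I then δ0 ⟨f, h⟩ else 1, ?_, ?_⟩
  · intro f hf
    rw [Set.Finite.mem_toFinset] at hf
    simp only [dif_pos hf]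
    exact hδ0 _
  · intro ν hν
    have : ν ∈ ⋂ i, V i := by
      refine Set.mem_iInter.mpr fun i => hδimp i ν ?_
      have := hν i (hIfin.mem_toFinset.mpr i.2)
      simpa only [dif_pos i.2, Subtype.coe_eta] using this
    rw [← hEq] at this
    exact this

end aux

/-- For a sequence of random Borel probability measures `μn` on a separable
metric space `S` and a deterministic probability measure `μ`, convergence to `0` in probability
of the Lévy–Prokhorov distance from `μn n` to `μ` is equivalent to convergence in probability of
`∫ f dμn` to `∫ f dμ` for every bounded continuous `f : S → ℝ`. -/
theorem fv_convergence_in_W_in_prob_iff_weakly_in_prob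
    {S : Type*} [MetricSpace S] [TopologicalSpace.SeparableSpace S]
    [MeasurableSpace S] [BorelSpace S]
    {Ω : Type*} [MeasurableSpace Ω] (P : Measure Ω) [IsProbabilityMeasure P]
    (μn : ℕ → Ω → ProbabilityMeasure S) (μ : ProbabilityMeasure S)
    (hmeas : ∀ n, @Measurable Ω (ProbabilityMeasure S) _ (borel (ProbabilityMeasure S)) (μn n)) :
    (∀ ε : ℝ, 0 < ε →
      Tendsto (fun n => P {ω | ε < levyProkhorovDist (μn n ω : Measure S) (μ : Measure S)})
        atTop (𝓝 0)) ↔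
    (∀ f : S →ᵇ ℝ, ∀ ε : ℝ, 0 < ε →
      Tendsto
        (fun n => P {ω | ε < |(∫ x, f x ∂(μn n ω : Measure S)) - ∫ x, f x ∂(μ : Measure S)|})
        atTop (𝓝 0)) := by
  constructor
  · -- forward: LP in prob → integrals in prob
    intro h f ε hε
    -- continuity of the integral map in the LP metric
    have hcont : Continuous (fun ν : LevyProkhorov (ProbabilityMeasure S) =>
        ∫ x, f x ∂((LevyProkhorov.toMeasureEquiv ν : ProbabilityMeasure S) : Measure S)) :=
      (ProbabilityMeasure.continuous_integral_boundedContinuousFunction f).comp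
        LevyProkhorov.continuous_toMeasure_probabilityMeasure
    have hca := hcont.continuousAt
      (x := (LevyProkhorov.toMeasureEquiv (α := ProbabilityMeasure S)).symm μ)
    rw [Metric.continuousAt_iff] at hca
    obtain ⟨δ, hδ, hδimp⟩ := hca ε hε
    have hsub : ∀ n, {ω | ε < |(∫ x, f x ∂(μn n ω : Measure S)) -
        ∫ x, f x ∂(μ : Measure S)|} ⊆
        {ω | δ / 2 < levyProkhorovDist (μn n ω : Measure S) (μ : Measure S)} := by
      intro n ω hω
      by_contra hc
      simp only [Set.mem_setOf_eq, not_lt] at hc hω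
      have hd : dist ((LevyProkhorov.toMeasureEquiv (α := ProbabilityMeasure S)).symm (μn n ω))
          ((LevyProkhorov.toMeasureEquiv (α := ProbabilityMeasure S)).symm μ) < δ := by
        have : dist ((LevyProkhorov.toMeasureEquiv (α := ProbabilityMeasure S)).symm (μn n ω))
            ((LevyProkhorov.toMeasureEquiv (α := ProbabilityMeasure S)).symm μ)
            = levyProkhorovDist (μn n ω : Measure S) (μ : Measure S) := rfl
        rw [this]; linarith
      have := hδimp hd
      rw [Real.dist_eq] at this
      simp only [Equiv.apply_symm_apply] at this
      exact absurd hω (not_lt.mpr this.le)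
    have hle : ∀ n, P {ω | ε < |(∫ x, f x ∂(μn n ω : Measure S)) -
        ∫ x, f x ∂(μ : Measure S)|} ≤
        P {ω | δ / 2 < levyProkhorovDist (μn n ω : Measure S) (μ : Measure S)} :=
      fun n => measure_mono (hsub n)
    exact tendsto_of_tendsto_of_tendsto_of_le_of_le tendsto_const_nhds
      (h (δ / 2) (by linarith)) (fun n => zero_le) hle
  · -- backward: integrals in prob → LP in prob
    intro h ε hε
    obtain ⟨t, δ, hδpos, himp⟩ := fv_aux_exists_finset μ hε
    have hsub : ∀ n, {ω | ε < levyProkhorovDist (μn n ω : Measure S) (μ : Measure S)} ⊆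
        ⋃ f ∈ t, {ω | δ f / 2 < |(∫ x, f x ∂(μn n ω : Measure S)) -
          ∫ x, f x ∂(μ : Measure S)|} := by
      intro n ω hω
      by_contra hc
      simp only [Set.mem_iUnion, Set.mem_setOf_eq, not_exists, not_lt] at hc
      have : levyProkhorovDist (μn n ω : Measure S) (μ : Measure S) < ε :=
        himp _ (fun f hf => lt_of_le_of_lt (hc f hf) (by have := hδpos f hf; linarith))
      exact absurd hω (by simp only [Set.mem_setOf_eq, not_lt]; exact this.le)
    have hle : ∀ n, P {ω | ε < levyProkhorovDist (μn n ω : Measure S) (μ : Measure S)} ≤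
        ∑ f ∈ t, P {ω | δ f / 2 < |(∫ x, f x ∂(μn n ω : Measure S)) -
          ∫ x, f x ∂(μ : Measure S)|} :=
      fun n => (measure_mono (hsub n)).trans (measure_biUnion_finset_le t _)
    have hsum : Tendsto (fun n => ∑ f ∈ t, P {ω | δ f / 2 <
        |(∫ x, f x ∂(μn n ω : Measure S)) - ∫ x, f x ∂(μ : Measure S)|})
        atTop (𝓝 0) := by
      have := tendsto_finset_sum t (fun f hf => h f (δ f / 2) (by have := hδpos f hf; linarith))
      simpa using this
    exact tendsto_of_tendsto_of_tendsto_of_le_of_le tendsto_const_nhds hsum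
      (fun n => zero_le) hle
end

section
/- Let (S,d) be a separable metric space, let (μ_n)_{n≥1} be a sequence of random Borel probability measures on S, and let μ be a deterministic Borel probability measure on S. Assume that for every bounded continuous function f : S → ℝ, the random variable ∫_S f dμ_n converges in probability to ∫_S f dμ. Then for every Borel set A ⊆ S with μ(∂A) = 0 (where ∂A denotes the topological boundary of A), the random variable μ_n(A) converges in probability to μ(A) as n → ∞. -/
open MeasureTheory Filter Topology BoundedContinuousFunction

open scoped ENNReal NNReal

section Aux

variable {S : Type*} [MetricSpace S] [MeasurableSpace S] [BorelSpace S]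

lemma fv_measure_closure_eq (μ : ProbabilityMeasure S) (B : Set S)
    (h0 : (μ : Measure S) (frontier B) = 0) :
    (μ : Measure S) (closure B) = (μ : Measure S) B := by
  apply le_antisymm
  · calc (μ : Measure S) (closure B) ≤ (μ : Measure S) (B ∪ frontier B) := by
          apply measure_mono
          intro x hx
          by_cases hxB : x ∈ B
          · exact Or.inl hxB
          · exact Or.inr ⟨hx, fun h => hxB (interior_subset h)⟩
    _ ≤ (μ : Measure S) B + (μ : Measure S) (frontier B) := measure_union_le _ _
    _ = (μ : Measure S) B := by rw [h0, add_zero]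
  · exact measure_mono subset_closure

/-- Key approximation: a bounded continuous function dominating the indicator of `B`
whose `μ`-integral is at most `μ B + ε`. -/
lemma fv_exists_bcf (μ : ProbabilityMeasure S) (B : Set S) (hB : MeasurableSet B)
    (h0 : (μ : Measure S) (frontier B) = 0) (ε : ℝ) (hε : 0 < ε) :
    ∃ f : S →ᵇ ℝ,
      (∀ ν : ProbabilityMeasure S,
        ((ν : Measure S) B).toReal ≤ ∫ x, f x ∂(ν : Measure S)) ∧
      ∫ x, f x ∂(μ : Measure S) ≤ ((μ : Measure S) B).toReal + ε := by
  -- choose δ with μ (thickening δ B) < μ B + ofReal ε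
  have hthick : Tendsto (fun r => (μ : Measure S) (Metric.thickening r B)) (𝓝[>] 0)
      (𝓝 ((μ : Measure S) (closure B))) :=
    tendsto_measure_thickening ⟨1, one_pos, measure_ne_top _ _⟩
  rw [fv_measure_closure_eq μ B h0] at hthick
  have hlt : (μ : Measure S) B < (μ : Measure S) B + ENNReal.ofReal ε := by
    apply ENNReal.lt_add_right (measure_ne_top _ _)
    simpa using hε
  have hev : ∀ᶠ r in 𝓝[>] (0:ℝ),
      (μ : Measure S) (Metric.thickening r B) < (μ : Measure S) B + ENNReal.ofReal ε :=
    hthick.eventually_lt_const hlt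
  obtain ⟨δ, hδ, hδmem⟩ := (hev.and eventually_mem_nhdsWithin).exists
  have δpos : (0:ℝ) < δ := hδmem
  -- the bounded continuous function
  have lip : LipschitzWith 1 (NNReal.toReal) :=
    Isometry.lipschitz (fun x y => rfl)
  refine ⟨BoundedContinuousFunction.comp NNReal.toReal lip (thickenedIndicator δpos B), ?_, ?_⟩
  · intro ν
    have hind : ∀ x, B.indicator (1 : S → ℝ) x ≤
        ((thickenedIndicator δpos B x : ℝ≥0) : ℝ) := by
      intro x
      by_cases hx : x ∈ B
      · simp only [Set.indicator_of_mem hx, Pi.one_apply]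
        rw [thickenedIndicator_one δpos B hx]
        norm_num
      · simp only [Set.indicator_of_notMem hx]
        positivity
    have hint : ∫ x, B.indicator (1 : S → ℝ) x ∂(ν : Measure S) ≤
        ∫ x, ((thickenedIndicator δpos B x : ℝ≥0) : ℝ) ∂(ν : Measure S) := by
      apply integral_mono _ _ hind
      · exact (integrable_const (1:ℝ)).indicator hB
      · exact (BoundedContinuousFunction.comp NNReal.toReal lip
          (thickenedIndicator δpos B)).integrable _
    calc ((ν : Measure S) B).toReal
        = ∫ x, B.indicator (1 : S → ℝ) x ∂(ν : Measure S) := by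
          rw [integral_indicator_one hB]; rfl
      _ ≤ _ := hint
  · have hind : ∀ x, ((thickenedIndicator δpos B x : ℝ≥0) : ℝ) ≤
        (Metric.thickening δ B).indicator (1 : S → ℝ) x := by
      intro x
      by_cases hx : x ∈ Metric.thickening δ B
      · simp only [Set.indicator_of_mem hx, Pi.one_apply]
        exact_mod_cast thickenedIndicator_le_one δpos B x
      · simp only [Set.indicator_of_notMem hx]
        rw [thickenedIndicator_zero δpos B hx]
        norm_num
    have hint : ∫ x, ((thickenedIndicator δpos B x : ℝ≥0) : ℝ) ∂(μ : Measure S) ≤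
        ∫ x, (Metric.thickening δ B).indicator (1 : S → ℝ) x ∂(μ : Measure S) := by
      apply integral_mono _ _ hind
      · exact (BoundedContinuousFunction.comp NNReal.toReal lip
          (thickenedIndicator δpos B)).integrable _
      · exact (integrable_const (1:ℝ)).indicator
          (Metric.isOpen_thickening.measurableSet)
    calc ∫ x, ((thickenedIndicator δpos B x : ℝ≥0) : ℝ) ∂(μ : Measure S)
        ≤ ∫ x, (Metric.thickening δ B).indicator (1 : S → ℝ) x ∂(μ : Measure S) := hint
      _ = ((μ : Measure S) (Metric.thickening δ B)).toReal := by
          rw [integral_indicator_one Metric.isOpen_thickening.measurableSet]; rfl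
      _ ≤ (((μ : Measure S) B) + ENNReal.ofReal ε).toReal := by
          apply ENNReal.toReal_mono _ hδ.le
          exact ENNReal.add_ne_top.2 ⟨measure_ne_top _ _, ENNReal.ofReal_ne_top⟩
      _ = ((μ : Measure S) B).toReal + ε := by
          rw [ENNReal.toReal_add (measure_ne_top _ _) ENNReal.ofReal_ne_top,
            ENNReal.toReal_ofReal hε.le]

lemma fv_coe_eq (ν : ProbabilityMeasure S) (B : Set S) :
    ((ν B : ℝ≥0) : ℝ) = ((ν : Measure S) B).toReal := rfl

lemma fv_compl_toReal (ν : ProbabilityMeasure S) {B : Set S} (hB : MeasurableSet B) :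
    ((ν : Measure S) Bᶜ).toReal = 1 - ((ν : Measure S) B).toReal := by
  rw [prob_compl_eq_one_sub hB, ENNReal.toReal_sub_of_le prob_le_one ENNReal.one_ne_top,
    ENNReal.toReal_one]

end Aux

/-- If the random probability measures `μn n` converge to the deterministic
probability measure `μ` in the sense that `∫ f dμn n → ∫ f dμ` in probability for every bounded
continuous `f`, then for every Borel set `A` with `μ (frontier A) = 0`, the random variable
`μn n A` converges in probability to `μ A`. -/
theorem fv_convergence_on_continuity_sets
    {S : Type*} [MetricSpace S] [TopologicalSpace.SeparableSpace S]
    [MeasurableSpace S] [BorelSpace S]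
    {Ω : Type*} [MeasurableSpace Ω] (P : Measure Ω) [IsProbabilityMeasure P]
    (μn : ℕ → Ω → ProbabilityMeasure S) (μ : ProbabilityMeasure S)
    (hmeas : ∀ n, @Measurable Ω (ProbabilityMeasure S) _ (borel (ProbabilityMeasure S)) (μn n))
    (hconv : ∀ f : S →ᵇ ℝ, ∀ ε : ℝ, 0 < ε →
      Tendsto
        (fun n => P {ω | ε < |(∫ x, f x ∂(μn n ω : Measure S)) - ∫ x, f x ∂(μ : Measure S)|})
        atTop (𝓝 0)) :
    ∀ A : Set S, MeasurableSet A → (μ : Measure S) (frontier A) = 0 →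
      ∀ ε : ℝ, 0 < ε →
        Tendsto (fun n => P {ω | ε < |((μn n ω) A : ℝ) - ((μ A : ℝ))|}) atTop (𝓝 0) := by
  intro A hA hnull ε hε
  have hε2 : (0:ℝ) < ε / 2 := by linarith
  -- upper approximation for A
  obtain ⟨f, hf_ge, hf_int⟩ := fv_exists_bcf μ A hA hnull (ε / 2) hε2
  -- upper approximation for Aᶜ
  have hnullc : (μ : Measure S) (frontier Aᶜ) = 0 := by rwa [frontier_compl]
  obtain ⟨g, hg_ge, hg_int⟩ := fv_exists_bcf μ Aᶜ hA.compl hnullc (ε / 2) hε2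
  -- the error event is contained in the union of the two integral-deviation events
  have hsub : ∀ n,
      {ω | ε < |((μn n ω) A : ℝ) - ((μ A : ℝ))|} ⊆
        {ω | ε / 2 < |(∫ x, f x ∂(μn n ω : Measure S)) - ∫ x, f x ∂(μ : Measure S)|} ∪
        {ω | ε / 2 < |(∫ x, g x ∂(μn n ω : Measure S)) - ∫ x, g x ∂(μ : Measure S)|} := by
    intro n ω hω
    simp only [Set.mem_setOf_eq, fv_coe_eq] at hω
    rcases lt_or_ge (((μn n ω : Measure S) A).toReal - ((μ : Measure S) A).toReal) 0 with hsgn | hsgn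
    · -- negative deviation: use g (for Aᶜ)
      right
      simp only [Set.mem_setOf_eq]
      have habs : ε < ((μ : Measure S) A).toReal - ((μn n ω : Measure S) A).toReal := by
        rw [abs_of_neg (by linarith)] at hω; linarith
      have h1 : ((μn n ω : Measure S) Aᶜ).toReal ≤ ∫ x, g x ∂(μn n ω : Measure S) :=
        hg_ge (μn n ω)
      have h2 : ((μn n ω : Measure S) Aᶜ).toReal = 1 - ((μn n ω : Measure S) A).toReal :=
        fv_compl_toReal _ hA
      have h3 : ((μ : Measure S) Aᶜ).toReal = 1 - ((μ : Measure S) A).toReal :=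
        fv_compl_toReal _ hA
      have hkey : ε / 2 < (∫ x, g x ∂(μn n ω : Measure S)) - ∫ x, g x ∂(μ : Measure S) := by
        have := hg_int
        rw [h3] at this
        rw [h2] at h1
        linarith
      exact lt_of_lt_of_le hkey (le_abs_self _)
    · -- positive deviation: use f (for A)
      left
      simp only [Set.mem_setOf_eq]
      have habs : ε < ((μn n ω : Measure S) A).toReal - ((μ : Measure S) A).toReal := by
        rw [abs_of_nonneg hsgn] at hω; linarith
      have h1 : ((μn n ω : Measure S) A).toReal ≤ ∫ x, f x ∂(μn n ω : Measure S) :=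
        hf_ge (μn n ω)
      have hkey : ε / 2 < (∫ x, f x ∂(μn n ω : Measure S)) - ∫ x, f x ∂(μ : Measure S) := by
        linarith
      exact lt_of_lt_of_le hkey (le_abs_self _)
  -- conclude by squeezing
  have h1 := hconv f (ε / 2) hε2
  have h2 := hconv g (ε / 2) hε2
  have hsum : Tendsto (fun n =>
      P {ω | ε / 2 < |(∫ x, f x ∂(μn n ω : Measure S)) - ∫ x, f x ∂(μ : Measure S)|} +
      P {ω | ε / 2 < |(∫ x, g x ∂(μn n ω : Measure S)) - ∫ x, g x ∂(μ : Measure S)|})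
      atTop (𝓝 0) := by
    have := Tendsto.add h1 h2
    simpa using this
  apply tendsto_of_tendsto_of_tendsto_of_le_of_le tendsto_const_nhds hsum
  · intro n; exact zero_le
  · intro n
    calc P {ω | ε < |((μn n ω) A : ℝ) - ((μ A : ℝ))|}
        ≤ P ({ω | ε / 2 < |(∫ x, f x ∂(μn n ω : Measure S)) - ∫ x, f x ∂(μ : Measure S)|} ∪
            {ω | ε / 2 < |(∫ x, g x ∂(μn n ω : Measure S)) - ∫ x, g x ∂(μ : Measure S)|}) :=
          measure_mono (hsub n)
      _ ≤ _ := measure_union_le _ _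
end

section
/- Let {γ^N_k : 1 ≤ k ≤ N, N ∈ ℕ} be a triangular array of real random variables on a probability space (Ω,𝔉,ℙ) which is uniformly integrable. Assume that for each N the random vector (γ^N_1, …, γ^N_N) is exchangeable, i.e. for every permutation σ of {1,…,N} the vector (γ^N_{σ(1)}, …, γ^N_{σ(N)}) has the same joint law as (γ^N_1, …, γ^N_N). Assume moreover that the pair (γ^N_1, γ^N_2) converges in distribution as N → ∞ to a pair (γ_1, γ_2) of independent, integrable random variables. Then (1/N)·Σ_{k=1}^N γ^N_k converges in probability to 𝔼[γ_1] as N → ∞. -/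
open MeasureTheory Filter Topology BoundedContinuousFunction

namespace FVaux

/-- Truncation at level `M`. -/
def trunc (M x : ℝ) : ℝ := max (-M) (min M x)

lemma trunc_continuous (M : ℝ) : Continuous (trunc M) := by
  unfold trunc; fun_prop

lemma abs_trunc_le (M x : ℝ) (hM : 0 ≤ M) : |trunc M x| ≤ M := by
  unfold trunc
  rw [abs_le]
  exact ⟨le_max_left _ _, max_le (by linarith) (min_le_left _ _)⟩

lemma abs_sub_trunc (M x : ℝ) (hM : 0 ≤ M) : |x - trunc M x| = max (|x| - M) 0 := by
  unfold trunc
  rcases le_total x 0 with hx | hx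
  · rw [abs_of_nonpos hx]
    rcases le_total x (-M) with h | h
    · rw [min_eq_right (by linarith), max_eq_left h, max_eq_left (by linarith),
        abs_of_nonpos (by linarith)]
      ring
    · rw [min_eq_right (by linarith), max_eq_right h, sub_self, abs_zero,
        max_eq_right (by linarith)]
  · rw [abs_of_nonneg hx]
    rcases le_total M x with h | h
    · rw [min_eq_left h, max_eq_right (by linarith), abs_of_nonneg (by linarith),
        max_eq_left (by linarith)]
    · rw [min_eq_right h, max_eq_right (by linarith), sub_self, abs_zero,
        max_eq_right (by linarith)]

/-- Truncation as a bounded continuous function (for `0 ≤ M`). -/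
noncomputable def truncBCF (M : ℝ) (hM : 0 ≤ M) : ℝ →ᵇ ℝ :=
  BoundedContinuousFunction.mkOfBound ⟨trunc M, trunc_continuous M⟩ (2 * M)
    (fun x y => by
      have hx := abs_trunc_le M x hM
      have hy := abs_trunc_le M y hM
      rw [Real.dist_eq]
      simp only [ContinuousMap.coe_mk]
      calc |trunc M x - trunc M y| ≤ |trunc M x| + |trunc M y| := abs_sub _ _
        _ ≤ 2 * M := by linarith)

@[simp] lemma truncBCF_apply (M : ℝ) (hM : 0 ≤ M) (x : ℝ) : truncBCF M hM x = trunc M x := rfl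

variable {Ω : Type*} [MeasurableSpace Ω] (P : Measure Ω) (γ : ℕ → ℕ → Ω → ℝ)

lemma map_single
    (hmeas : ∀ N k, k < N → Measurable (γ N k))
    (hexch : ∀ N : ℕ, ∀ σ : Equiv.Perm (Fin N),
      Measure.map (fun ω => fun k : Fin N => γ N (σ k : ℕ) ω) P =
        Measure.map (fun ω => fun k : Fin N => γ N (k : ℕ) ω) P)
    {N j : ℕ} (hj : j < N) :
    Measure.map (γ N j) P = Measure.map (γ N 0) P := by
  have hN : 0 < N := Nat.lt_of_le_of_lt (Nat.zero_le j) hj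
  set i0 : Fin N := ⟨0, hN⟩ with hi0
  set σ : Equiv.Perm (Fin N) := Equiv.swap i0 ⟨j, hj⟩ with hσ
  have h := hexch N σ
  have hF : Measurable (fun v : Fin N → ℝ => v i0) := measurable_pi_apply _
  have hmσ : Measurable (fun ω => fun k : Fin N => γ N (σ k : ℕ) ω) :=
    measurable_pi_lambda _ fun k => hmeas N _ (σ k).isLt
  have hmid : Measurable (fun ω => fun k : Fin N => γ N (k : ℕ) ω) :=
    measurable_pi_lambda _ fun k => hmeas N _ k.isLt
  have h1 := congrArg (Measure.map (fun v : Fin N → ℝ => v i0)) h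
  rw [Measure.map_map hF hmσ, Measure.map_map hF hmid] at h1
  have e1 : ((fun v : Fin N → ℝ => v i0) ∘ (fun ω => fun k : Fin N => γ N (σ k : ℕ) ω))
      = γ N j := by
    funext ω
    simp only [Function.comp_apply, hσ, Equiv.swap_apply_left]
  have e2 : ((fun v : Fin N → ℝ => v i0) ∘ (fun ω => fun k : Fin N => γ N (k : ℕ) ω))
      = γ N 0 := by
    funext ω; rfl
  rw [e1, e2] at h1
  exact h1

lemma map_pair
    (hmeas : ∀ N k, k < N → Measurable (γ N k))
    (hexch : ∀ N : ℕ, ∀ σ : Equiv.Perm (Fin N),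
      Measure.map (fun ω => fun k : Fin N => γ N (σ k : ℕ) ω) P =
        Measure.map (fun ω => fun k : Fin N => γ N (k : ℕ) ω) P)
    {N j k : ℕ} (hj : j < N) (hk : k < N) (hjk : j ≠ k) :
    Measure.map (fun ω => (γ N j ω, γ N k ω)) P
      = Measure.map (fun ω => (γ N 0 ω, γ N 1 ω)) P := by
  have hN : 1 < N := by omega
  set i0 : Fin N := ⟨0, by omega⟩ with hi0
  set i1 : Fin N := ⟨1, hN⟩ with hi1
  set ij : Fin N := ⟨j, hj⟩ with hij
  set ik : Fin N := ⟨k, hk⟩ with hik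
  set σ1 : Equiv.Perm (Fin N) := Equiv.swap i0 ij with hσ1
  set σ : Equiv.Perm (Fin N) := σ1 * Equiv.swap i1 (σ1⁻¹ ik) with hσ
  have hσ0 : σ i0 = ij := by
    rw [hσ, Equiv.Perm.mul_apply]
    have h01 : i0 ≠ i1 := by simp [hi0, hi1, Fin.ext_iff]
    have h0k : i0 ≠ σ1⁻¹ ik := by
      intro hcon
      have h2 : σ1 i0 = ik := by rw [hcon, Equiv.Perm.inv_def, Equiv.apply_symm_apply]
      rw [hσ1, Equiv.swap_apply_left] at h2
      exact hjk (by simpa [hij, hik, Fin.ext_iff] using h2)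
    rw [Equiv.swap_apply_of_ne_of_ne h01 h0k, hσ1, Equiv.swap_apply_left]
  have hσ1k : σ i1 = ik := by
    rw [hσ, Equiv.Perm.mul_apply, Equiv.swap_apply_left, Equiv.Perm.inv_def, Equiv.apply_symm_apply]
  have h := hexch N σ
  have hF : Measurable (fun v : Fin N → ℝ => (v i0, v i1)) :=
    (measurable_pi_apply _).prodMk (measurable_pi_apply _)
  have hmσ : Measurable (fun ω => fun k : Fin N => γ N (σ k : ℕ) ω) :=
    measurable_pi_lambda _ fun k => hmeas N _ (σ k).isLt
  have hmid : Measurable (fun ω => fun k : Fin N => γ N (k : ℕ) ω) :=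
    measurable_pi_lambda _ fun k => hmeas N _ k.isLt
  have h1 := congrArg (Measure.map (fun v : Fin N → ℝ => (v i0, v i1))) h
  rw [Measure.map_map hF hmσ, Measure.map_map hF hmid] at h1
  have e1 : ((fun v : Fin N → ℝ => (v i0, v i1)) ∘
      (fun ω => fun k : Fin N => γ N (σ k : ℕ) ω)) = fun ω => (γ N j ω, γ N k ω) := by
    funext ω
    simp only [Function.comp_apply, hσ0, hσ1k]
    rfl
  have e2 : ((fun v : Fin N → ℝ => (v i0, v i1)) ∘
      (fun ω => fun k : Fin N => γ N (k : ℕ) ω)) = fun ω => (γ N 0 ω, γ N 1 ω) := by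
    funext ω; rfl
  rw [e1, e2] at h1
  exact h1

lemma int_single
    (hmeas : ∀ N k, k < N → Measurable (γ N k))
    (hexch : ∀ N : ℕ, ∀ σ : Equiv.Perm (Fin N),
      Measure.map (fun ω => fun k : Fin N => γ N (σ k : ℕ) ω) P =
        Measure.map (fun ω => fun k : Fin N => γ N (k : ℕ) ω) P)
    {N j : ℕ} (hj : j < N) {φ : ℝ → ℝ} (hφ : Measurable φ) :
    ∫ ω, φ (γ N j ω) ∂P = ∫ ω, φ (γ N 0 ω) ∂P := by
  have law := map_single P γ hmeas hexch hj
  have h0 : 0 < N := Nat.lt_of_le_of_lt (Nat.zero_le j) hj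
  rw [← integral_map (hmeas N j hj).aemeasurable hφ.aestronglyMeasurable, law,
    integral_map (hmeas N 0 h0).aemeasurable hφ.aestronglyMeasurable]

lemma int_pair
    (hmeas : ∀ N k, k < N → Measurable (γ N k))
    (hexch : ∀ N : ℕ, ∀ σ : Equiv.Perm (Fin N),
      Measure.map (fun ω => fun k : Fin N => γ N (σ k : ℕ) ω) P =
        Measure.map (fun ω => fun k : Fin N => γ N (k : ℕ) ω) P)
    {N j k : ℕ} (hj : j < N) (hk : k < N) (hjk : j ≠ k) {ψ : ℝ × ℝ → ℝ}
    (hψ : Measurable ψ) :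
    ∫ ω, ψ (γ N j ω, γ N k ω) ∂P = ∫ ω, ψ (γ N 0 ω, γ N 1 ω) ∂P := by
  have law := map_pair P γ hmeas hexch hj hk hjk
  have hN : 1 < N := by omega
  have hm1 : Measurable (fun ω => (γ N j ω, γ N k ω)) :=
    (hmeas N j hj).prodMk (hmeas N k hk)
  have hm2 : Measurable (fun ω => (γ N 0 ω, γ N 1 ω)) :=
    (hmeas N 0 (by omega)).prodMk (hmeas N 1 hN)
  rw [← integral_map hm1.aemeasurable hψ.aestronglyMeasurable, law,
    integral_map hm2.aemeasurable hψ.aestronglyMeasurable]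

end FVaux

set_option maxHeartbeats 2000000

/-- **weak convergence lemma for exchangeable triangular arrays.**
Let `γ N k`, for `k < N`, be a uniformly integrable triangular array of real random variables
such that `(γ N 0, …, γ N (N-1))` is exchangeable for each `N` and `(γ N 0, γ N 1)` converges
in distribution to a pair `(γ₁, γ₂)` of independent integrable random variables. Then
`(1/N) ∑_{k<N} γ N k` converges in probability to `𝔼[γ₁]`. -/
theorem fv_weak_convergence_lemma
    {Ω : Type*} [MeasurableSpace Ω] (P : Measure Ω) [IsProbabilityMeasure P]
    {Ω' : Type*} [MeasurableSpace Ω'] (P' : Measure Ω') [IsProbabilityMeasure P']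
    (γ : ℕ → ℕ → Ω → ℝ) (γ₁ γ₂ : Ω' → ℝ)
    (hmeas : ∀ N k, k < N → Measurable (γ N k))
    (hint : ∀ N k, k < N → Integrable (γ N k) P)
    (hUI : ∀ δ : ℝ, 0 < δ → ∃ M : ℝ, ∀ N k, k < N →
      ∫ ω in {ω | M < |γ N k ω|}, |γ N k ω| ∂P ≤ δ)
    (hexch : ∀ N : ℕ, ∀ σ : Equiv.Perm (Fin N),
      Measure.map (fun ω => fun k : Fin N => γ N (σ k : ℕ) ω) P =
        Measure.map (fun ω => fun k : Fin N => γ N (k : ℕ) ω) P)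
    (hγ₁ : Integrable γ₁ P') (hγ₂ : Integrable γ₂ P')
    (hindep : ProbabilityTheory.IndepFun γ₁ γ₂ P')
    (hconv : ∀ g : (ℝ × ℝ) →ᵇ ℝ,
      Tendsto (fun N => ∫ ω, g (γ N 0 ω, γ N 1 ω) ∂P) atTop
        (𝓝 (∫ ω', g (γ₁ ω', γ₂ ω') ∂P'))) :
    ∀ ε : ℝ, 0 < ε →
      Tendsto
        (fun N => P {ω | ε < |(∑ k ∈ Finset.range N, γ N k ω) / N - ∫ ω', γ₁ ω' ∂P'|})
        atTop (𝓝 0) := by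
  intro ε hε
  rw [ENNReal.tendsto_atTop_zero]
  intro η hη
  -- reduce the ENNReal target to a real one
  set η' := min η 1 with hη'def
  have hη'top : η' ≠ ⊤ := ne_top_of_le_ne_top ENNReal.one_ne_top (min_le_right _ _)
  have hη'pos : 0 < η' := lt_min hη zero_lt_one
  set θ : ℝ := η'.toReal with hθdef
  have hθpos : 0 < θ := ENNReal.toReal_pos hη'pos.ne' hη'top
  have hθ1 : θ ≤ 1 := by
    have h := ENNReal.toReal_mono ENNReal.one_ne_top (min_le_right η 1)
    simpa [hθdef, hη'def] using h
  have hofθ : ENNReal.ofReal θ = η' := ENNReal.ofReal_toReal hη'top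
  have hη'le : η' ≤ η := min_le_left _ _
  -- the truncation level
  set δ : ℝ := ε * θ / 24 with hδdef
  have hδpos : 0 < δ := by positivity
  have hδε : δ ≤ ε / 24 := by
    rw [hδdef]
    rw [div_le_div_iff₀ (by norm_num) (by norm_num)]
    nlinarith
  obtain ⟨M₁, hM₁⟩ := hUI δ hδpos
  -- tail control for γ₁
  have htail : Tendsto (fun n : ℕ => ∫ ω', max (|γ₁ ω'| - n) 0 ∂P') atTop (𝓝 0) := by
    have h : Tendsto (fun n : ℕ => ∫ ω', max (|γ₁ ω'| - n) 0 ∂P') atTop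
        (𝓝 (∫ _ω', (0 : ℝ) ∂P')) := by
      apply tendsto_integral_of_dominated_convergence (fun ω' => |γ₁ ω'|)
      · intro n
        exact (((hγ₁.abs.aemeasurable.sub aemeasurable_const).max
          aemeasurable_const).aestronglyMeasurable)
      · exact hγ₁.abs
      · intro n
        filter_upwards with ω'
        rw [Real.norm_eq_abs, abs_of_nonneg (le_max_right _ _)]
        exact max_le (by have : (0:ℝ) ≤ (n:ℝ) := Nat.cast_nonneg n; linarith) (abs_nonneg _)
      · filter_upwards with ω'
        have hev : ∀ᶠ n : ℕ in atTop, max (|γ₁ ω'| - n) 0 = 0 := by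
          filter_upwards [eventually_ge_atTop ⌈|γ₁ ω'|⌉₊] with n hn
          refine max_eq_right ?_
          have := Nat.le_ceil |γ₁ ω'|
          have hcast : (⌈|γ₁ ω'|⌉₊ : ℝ) ≤ n := by exact_mod_cast hn
          linarith
        exact Tendsto.congr' (Filter.EventuallyEq.symm hev) tendsto_const_nhds
    simpa using h
  obtain ⟨n₂, hn₂⟩ := (htail.eventually_le_const hδpos).exists
  set M : ℝ := max M₁ (max (n₂ : ℝ) 1) with hMdef
  have hM1 : 1 ≤ M := le_max_of_le_right (le_max_right _ _)
  have hM0 : 0 ≤ M := by linarith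
  have hMM₁ : M₁ ≤ M := le_max_left _ _
  have hMn₂ : (n₂ : ℝ) ≤ M := le_max_of_le_right (le_max_left _ _)
  have htm : Measurable (FVaux.trunc M) := (FVaux.trunc_continuous M).measurable
  have htabs : ∀ x, |FVaux.trunc M x| ≤ M := fun x => FVaux.abs_trunc_le M x hM0
  -- tail bounds at level M
  have hT1 : ∀ N k, k < N → ∫ ω, max (|γ N k ω| - M) 0 ∂P ≤ δ := by
    intro N k hk
    have hγm := hmeas N k hk
    have hγi := hint N k hk
    have hsm : MeasurableSet {ω | M₁ < |γ N k ω|} :=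
      measurableSet_lt measurable_const hγm.abs
    have hgint : Integrable (fun ω => max (|γ N k ω| - M) 0) P := by
      refine hγi.abs.mono'
        (((hγm.abs.sub measurable_const).max measurable_const).aestronglyMeasurable) ?_
      filter_upwards with ω
      rw [Real.norm_eq_abs, abs_of_nonneg (le_max_right _ _)]
      exact max_le (by linarith) (abs_nonneg _)
    have heq : ∫ ω, max (|γ N k ω| - M) 0 ∂P
        = ∫ ω in {ω | M₁ < |γ N k ω|}, max (|γ N k ω| - M) 0 ∂P := by
      rw [← integral_indicator hsm]
      apply integral_congr_ae
      filter_upwards with ω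
      by_cases hω : ω ∈ {ω | M₁ < |γ N k ω|}
      · rw [Set.indicator_of_mem hω]
      · rw [Set.indicator_of_notMem hω]
        simp only [Set.mem_setOf_eq, not_lt] at hω
        exact max_eq_right (by linarith)
    rw [heq]
    calc ∫ ω in {ω | M₁ < |γ N k ω|}, max (|γ N k ω| - M) 0 ∂P
        ≤ ∫ ω in {ω | M₁ < |γ N k ω|}, |γ N k ω| ∂P := by
          refine setIntegral_mono_on hgint.integrableOn hγi.abs.integrableOn hsm ?_
          intro ω _
          exact max_le (by linarith) (abs_nonneg _)
      _ ≤ δ := hM₁ N k hk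
  have hT2 : ∫ ω', max (|γ₁ ω'| - M) 0 ∂P' ≤ δ := by
    have hintM : ∀ c : ℝ, 0 ≤ c → Integrable (fun ω' => max (|γ₁ ω'| - c) 0) P' := by
      intro c hc
      refine hγ₁.abs.mono'
        (((hγ₁.abs.aemeasurable.sub aemeasurable_const).max
          aemeasurable_const).aestronglyMeasurable) ?_
      filter_upwards with ω'
      rw [Real.norm_eq_abs, abs_of_nonneg (le_max_right _ _)]
      exact max_le (by linarith) (abs_nonneg _)
    calc ∫ ω', max (|γ₁ ω'| - M) 0 ∂P' ≤ ∫ ω', max (|γ₁ ω'| - (n₂ : ℝ)) 0 ∂P' := by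
          refine integral_mono (hintM M hM0) (hintM _ (Nat.cast_nonneg _)) ?_
          intro ω'
          exact max_le_max (by linarith) le_rfl
      _ ≤ δ := hn₂
  -- integrability of truncations
  have hfint : ∀ N k, k < N → Integrable (fun ω => FVaux.trunc M (γ N k ω)) P := by
    intro N k hk
    refine (integrable_const M).mono' ((htm.comp (hmeas N k hk)).aestronglyMeasurable) ?_
    filter_upwards with ω
    rw [Real.norm_eq_abs]
    exact htabs _
  have hdiffint : ∀ N k, k < N →
      Integrable (fun ω => γ N k ω - FVaux.trunc M (γ N k ω)) P :=
    fun N k hk => (hint N k hk).sub (hfint N k hk)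
  have hdiffabs : ∀ N k, k < N →
      ∫ ω, |γ N k ω - FVaux.trunc M (γ N k ω)| ∂P ≤ δ := by
    intro N k hk
    calc ∫ ω, |γ N k ω - FVaux.trunc M (γ N k ω)| ∂P
        = ∫ ω, max (|γ N k ω| - M) 0 ∂P := by
          apply integral_congr_ae
          filter_upwards with ω
          exact FVaux.abs_sub_trunc M _ hM0
      _ ≤ δ := hT1 N k hk
  -- limits from weak convergence
  have hμconv : Tendsto (fun N => ∫ ω, FVaux.trunc M (γ N 0 ω) ∂P) atTop
      (𝓝 (∫ ω', FVaux.trunc M (γ₁ ω') ∂P')) := by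
    have h := hconv ((FVaux.truncBCF M hM0).compContinuous ContinuousMap.fst)
    simpa only [BoundedContinuousFunction.compContinuous_apply, ContinuousMap.fst_apply,
      FVaux.truncBCF_apply] using h
  have hνconv : Tendsto (fun N => ∫ ω, FVaux.trunc M (γ N 1 ω) ∂P) atTop
      (𝓝 (∫ ω', FVaux.trunc M (γ₂ ω') ∂P')) := by
    have h := hconv ((FVaux.truncBCF M hM0).compContinuous ContinuousMap.snd)
    simpa only [BoundedContinuousFunction.compContinuous_apply, ContinuousMap.snd_apply,
      FVaux.truncBCF_apply] using h
  have hIconv : Tendsto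
      (fun N => ∫ ω, FVaux.trunc M (γ N 0 ω) * FVaux.trunc M (γ N 1 ω) ∂P) atTop
      (𝓝 (∫ ω', FVaux.trunc M (γ₁ ω') * FVaux.trunc M (γ₂ ω') ∂P')) := by
    have h := hconv (((FVaux.truncBCF M hM0).compContinuous ContinuousMap.fst) *
      ((FVaux.truncBCF M hM0).compContinuous ContinuousMap.snd))
    simpa only [BoundedContinuousFunction.coe_mul, Pi.mul_apply,
      BoundedContinuousFunction.compContinuous_apply, ContinuousMap.fst_apply,
      ContinuousMap.snd_apply, FVaux.truncBCF_apply] using h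
  -- independence of the truncated limits
  have hγ₁t : Integrable (fun ω' => FVaux.trunc M (γ₁ ω')) P' := by
    refine (integrable_const M).mono'
      ((htm.comp_aemeasurable hγ₁.aemeasurable).aestronglyMeasurable) ?_
    filter_upwards with ω'
    rw [Real.norm_eq_abs]
    exact htabs _
  have hγ₂t : Integrable (fun ω' => FVaux.trunc M (γ₂ ω')) P' := by
    refine (integrable_const M).mono'
      ((htm.comp_aemeasurable hγ₂.aemeasurable).aestronglyMeasurable) ?_
    filter_upwards with ω'
    rw [Real.norm_eq_abs]
    exact htabs _
  have hindep' : ∫ ω', FVaux.trunc M (γ₁ ω') * FVaux.trunc M (γ₂ ω') ∂P'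
      = (∫ ω', FVaux.trunc M (γ₁ ω') ∂P') * (∫ ω', FVaux.trunc M (γ₂ ω') ∂P') :=
    (hindep.comp htm htm).integral_mul_eq_mul_integral hγ₁t.aestronglyMeasurable hγ₂t.aestronglyMeasurable
  -- the two one-dimensional limits coincide
  have hμν : (∫ ω', FVaux.trunc M (γ₁ ω') ∂P') = ∫ ω', FVaux.trunc M (γ₂ ω') ∂P' := by
    have heq : ∀ᶠ N in atTop,
        ∫ ω, FVaux.trunc M (γ N 1 ω) ∂P = ∫ ω, FVaux.trunc M (γ N 0 ω) ∂P := by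
      filter_upwards [eventually_ge_atTop 2] with N hN
      exact FVaux.int_single P γ hmeas hexch (by omega) htm
    exact tendsto_nhds_unique (hνconv.congr' heq) hμconv |>.symm
  -- covariance goes to 0
  have hC0 : Tendsto (fun N =>
      (∫ ω, FVaux.trunc M (γ N 0 ω) * FVaux.trunc M (γ N 1 ω) ∂P)
        - (∫ ω, FVaux.trunc M (γ N 0 ω) ∂P) * (∫ ω, FVaux.trunc M (γ N 0 ω) ∂P))
      atTop (𝓝 0) := by
    have h := hIconv.sub (hμconv.mul hμconv)
    rw [hindep', hμν] at h
    simpa using h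
  -- choose N₀
  set ρ : ℝ := (ε / 3) ^ 2 * θ with hρdef
  have hρpos : 0 < ρ := by positivity
  have E2 : ∀ᶠ N in atTop,
      |(∫ ω, FVaux.trunc M (γ N 0 ω) ∂P) - ∫ ω', FVaux.trunc M (γ₁ ω') ∂P'| ≤ ε / 12 := by
    have h := hμconv (Metric.ball_mem_nhds _ (show (0:ℝ) < ε / 12 by positivity))
    filter_upwards [h] with N hN
    exact le_of_lt (by simpa [Set.mem_preimage, Metric.mem_ball, Real.dist_eq] using hN)
  have E3 : ∀ᶠ N in atTop,
      |(∫ ω, FVaux.trunc M (γ N 0 ω) * FVaux.trunc M (γ N 1 ω) ∂P)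
        - (∫ ω, FVaux.trunc M (γ N 0 ω) ∂P) * (∫ ω, FVaux.trunc M (γ N 0 ω) ∂P)| ≤ ρ / 4 := by
    have h := hC0 (Metric.ball_mem_nhds _ (show (0:ℝ) < ρ / 4 by positivity))
    filter_upwards [h] with N hN
    exact le_of_lt (by simpa [Set.mem_preimage, Metric.mem_ball, Real.dist_eq] using hN)
  have E4 : ∀ᶠ N : ℕ in atTop, 4 * M ^ 2 / (N : ℝ) ≤ ρ / 4 := by
    have h := (tendsto_const_div_atTop_nhds_zero_nat (4 * M ^ 2))
      (Metric.ball_mem_nhds _ (show (0:ℝ) < ρ / 4 by positivity))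
    filter_upwards [h] with N hN
    exact le_of_lt (by simpa [Set.mem_preimage, Metric.mem_ball, Real.dist_eq] using hN)
  have hbig := (eventually_ge_atTop 2).and (E2.and (E3.and E4))
  rw [eventually_atTop] at hbig
  obtain ⟨N₀, hN₀⟩ := hbig
  refine ⟨N₀, fun N hN => ?_⟩
  obtain ⟨hN2, hE2, hE3, hE4⟩ := hN₀ N hN
  have hNR : (0:ℝ) < N := by
    have h2 : (2:ℝ) ≤ N := by exact_mod_cast hN2
    linarith
  have h0N : 0 < N := by omega
  have h1N : 1 < N := by omega
  set m : ℝ := ∫ ω', γ₁ ω' ∂P' with hm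
  set μ : ℝ := ∫ ω, FVaux.trunc M (γ N 0 ω) ∂P with hμdef
  set r : ℝ := ∫ ω, (γ N 0 ω - FVaux.trunc M (γ N 0 ω)) ∂P with hrdef
  set X : ℕ → Ω → ℝ := fun k ω => FVaux.trunc M (γ N k ω) - μ with hX
  set d : ℕ → Ω → ℝ := fun k ω => γ N k ω - FVaux.trunc M (γ N k ω) with hd
  set A : Ω → ℝ := fun ω => (∑ k ∈ Finset.range N, X k ω) / N with hA
  set B : Ω → ℝ := fun ω => (∑ k ∈ Finset.range N, (d k ω - r)) / N with hB
  have hrabs : |r| ≤ δ := by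
    have h1 : |r| ≤ ∫ ω, |γ N 0 ω - FVaux.trunc M (γ N 0 ω)| ∂P := by
      rw [hrdef]
      simpa [Real.norm_eq_abs] using
        norm_integral_le_integral_norm (f := fun ω => γ N 0 ω - FVaux.trunc M (γ N 0 ω)) (μ := P)
    exact h1.trans (hdiffabs N 0 h0N)
  have hμabs : |μ| ≤ M := by
    have h1 : |μ| ≤ ∫ ω, |FVaux.trunc M (γ N 0 ω)| ∂P := by
      rw [hμdef]
      simpa [Real.norm_eq_abs] using
        norm_integral_le_integral_norm (f := fun ω => FVaux.trunc M (γ N 0 ω)) (μ := P)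
    refine h1.trans ?_
    calc ∫ ω, |FVaux.trunc M (γ N 0 ω)| ∂P ≤ ∫ _ω, M ∂P :=
          integral_mono (hfint N 0 h0N).abs (integrable_const M) (fun ω => htabs _)
      _ = M := by simp
  have hmum : |(∫ ω', FVaux.trunc M (γ₁ ω') ∂P') - m| ≤ δ := by
    have he : (∫ ω', FVaux.trunc M (γ₁ ω') ∂P') - m
        = ∫ ω', (FVaux.trunc M (γ₁ ω') - γ₁ ω') ∂P' := (integral_sub hγ₁t hγ₁).symm
    rw [he]
    have h1 : |∫ ω', (FVaux.trunc M (γ₁ ω') - γ₁ ω') ∂P'|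
        ≤ ∫ ω', |FVaux.trunc M (γ₁ ω') - γ₁ ω'| ∂P' := by
      simpa [Real.norm_eq_abs] using
        norm_integral_le_integral_norm (f := fun ω' => FVaux.trunc M (γ₁ ω') - γ₁ ω') (μ := P')
    refine h1.trans ?_
    calc ∫ ω', |FVaux.trunc M (γ₁ ω') - γ₁ ω'| ∂P'
        = ∫ ω', max (|γ₁ ω'| - M) 0 ∂P' := by
          apply integral_congr_ae
          filter_upwards with ω'
          rw [abs_sub_comm]
          exact FVaux.abs_sub_trunc M _ hM0
      _ ≤ δ := hT2
  have ham : |μ + r - m| ≤ ε / 3 := by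
    have h2 := abs_add_le (μ - ∫ ω', FVaux.trunc M (γ₁ ω') ∂P') r
    have h3 := abs_add_le ((μ - ∫ ω', FVaux.trunc M (γ₁ ω') ∂P') + r)
      ((∫ ω', FVaux.trunc M (γ₁ ω') ∂P') - m)
    have he : μ + r - m = ((μ - ∫ ω', FVaux.trunc M (γ₁ ω') ∂P') + r)
      + ((∫ ω', FVaux.trunc M (γ₁ ω') ∂P') - m) := by ring
    rw [he]
    linarith [hE2, hrabs, hmum]
  have hXmeas : ∀ k, k < N → Measurable (X k) := by
    intro k hk
    simp only [hX]
    exact (htm.comp (hmeas N k hk)).sub measurable_const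
  have hXabs : ∀ k ω, |X k ω| ≤ 2 * M := by
    intro k ω
    simp only [hX]
    calc |FVaux.trunc M (γ N k ω) - μ| ≤ |FVaux.trunc M (γ N k ω)| + |μ| := abs_sub _ _
      _ ≤ 2 * M := by linarith [htabs (γ N k ω)]
  have hXXint : ∀ j k, j < N → k < N → Integrable (fun ω => X j ω * X k ω) P := by
    intro j k hj hk
    refine (integrable_const (2 * M * (2 * M))).mono'
      ((hXmeas j hj).mul (hXmeas k hk)).aestronglyMeasurable ?_
    filter_upwards with ω
    rw [Real.norm_eq_abs, abs_mul]
    exact mul_le_mul (hXabs j ω) (hXabs k ω) (abs_nonneg _) (by linarith)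
  have hVdef : ∀ j, j < N → ∫ ω, X j ω * X j ω ∂P = ∫ ω, X 0 ω * X 0 ω ∂P := by
    intro j hj
    have hφ : Measurable (fun x : ℝ => (FVaux.trunc M x - μ) * (FVaux.trunc M x - μ)) :=
      (htm.sub measurable_const).mul (htm.sub measurable_const)
    simp only [hX]
    exact FVaux.int_single P γ hmeas hexch hj hφ
  have hCdef : ∀ j k, j < N → k < N → j ≠ k →
      ∫ ω, X j ω * X k ω ∂P = ∫ ω, X 0 ω * X 1 ω ∂P := by
    intro j k hj hk hjk
    have hψ : Measurable (fun p : ℝ × ℝ =>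
        (FVaux.trunc M p.1 - μ) * (FVaux.trunc M p.2 - μ)) :=
      ((htm.comp measurable_fst).sub measurable_const).mul
        ((htm.comp measurable_snd).sub measurable_const)
    simp only [hX]
    exact FVaux.int_pair P γ hmeas hexch hj hk hjk hψ
  set V : ℝ := ∫ ω, X 0 ω * X 0 ω ∂P with hVd
  set C : ℝ := ∫ ω, X 0 ω * X 1 ω ∂P with hCd
  have hsum : ∫ ω, (∑ k ∈ Finset.range N, X k ω) * (∑ k ∈ Finset.range N, X k ω) ∂P
      = N * V + (N * ((N : ℝ) - 1)) * C := by
    have h1 : (fun ω => (∑ j ∈ Finset.range N, X j ω) * (∑ k ∈ Finset.range N, X k ω))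
        = fun ω => ∑ j ∈ Finset.range N, ∑ k ∈ Finset.range N, X j ω * X k ω := by
      funext ω
      exact Finset.sum_mul_sum _ _ _ _
    rw [h1]
    rw [integral_finset_sum _ (fun j hj => integrable_finset_sum _
      (fun k hk => hXXint j k (Finset.mem_range.mp hj) (Finset.mem_range.mp hk)))]
    have h2 : ∀ j ∈ Finset.range N,
        ∫ ω, ∑ k ∈ Finset.range N, X j ω * X k ω ∂P
          = ∑ k ∈ Finset.range N, ∫ ω, X j ω * X k ω ∂P := fun j hj =>
      integral_finset_sum _ (fun k hk => hXXint j k (Finset.mem_range.mp hj)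
        (Finset.mem_range.mp hk))
    rw [Finset.sum_congr rfl h2]
    have h3 : ∀ j ∈ Finset.range N,
        ∑ k ∈ Finset.range N, ∫ ω, X j ω * X k ω ∂P = V + ((N : ℝ) - 1) * C := by
      intro j hj
      have hjN := Finset.mem_range.mp hj
      rw [← Finset.add_sum_erase _ _ hj, hVdef j hjN]
      have h4 : ∑ k ∈ (Finset.range N).erase j, ∫ ω, X j ω * X k ω ∂P
          = ∑ _k ∈ (Finset.range N).erase j, C :=
        Finset.sum_congr rfl fun k hk => hCdef j k hjN
          (Finset.mem_range.mp (Finset.mem_of_mem_erase hk))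
          (Ne.symm (Finset.ne_of_mem_erase hk))
      rw [h4, Finset.sum_const, Finset.card_erase_of_mem hj, Finset.card_range,
        nsmul_eq_mul, Nat.cast_sub (by omega : 1 ≤ N)]
      norm_num
    rw [Finset.sum_congr rfl h3, Finset.sum_const, Finset.card_range, nsmul_eq_mul]
    ring
  have hmA : Measurable A := by
    simp only [hA]
    exact (Finset.measurable_sum _ fun k hk => hXmeas k (Finset.mem_range.mp hk)).div_const _
  have hAbound : ∀ ω, |A ω| ≤ 2 * M := by
    intro ω
    simp only [hA]
    rw [abs_div, abs_of_pos hNR, div_le_iff₀ hNR]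
    calc |∑ k ∈ Finset.range N, X k ω| ≤ ∑ k ∈ Finset.range N, |X k ω| :=
          Finset.abs_sum_le_sum_abs _ _
      _ ≤ ∑ _k ∈ Finset.range N, 2 * M := Finset.sum_le_sum fun k _ => hXabs k ω
      _ = 2 * M * N := by rw [Finset.sum_const, Finset.card_range, nsmul_eq_mul]; ring
  have hintA2 : Integrable (fun ω => A ω * A ω) P := by
    refine (integrable_const (2 * M * (2 * M))).mono'
      (hmA.mul hmA).aestronglyMeasurable ?_
    filter_upwards with ω
    rw [Real.norm_eq_abs, abs_mul]
    exact mul_le_mul (hAbound ω) (hAbound ω) (abs_nonneg _) (by linarith)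
  have hA2val : ∫ ω, A ω * A ω ∂P = V / N + (((N : ℝ) - 1) / N) * C := by
    have heq : (fun ω => A ω * A ω) = fun ω =>
        ((∑ k ∈ Finset.range N, X k ω) * (∑ k ∈ Finset.range N, X k ω)) / ((N : ℝ) * N) := by
      funext ω
      simp only [hA]
      field_simp
    rw [heq, integral_div, hsum]
    field_simp
  have hVle : V ≤ 4 * M ^ 2 := by
    rw [hVd]
    calc ∫ ω, X 0 ω * X 0 ω ∂P ≤ ∫ _ω, 2 * M * (2 * M) ∂P := by
          refine integral_mono (hXXint 0 0 h0N h0N) (integrable_const _) ?_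
          intro ω
          show X 0 ω * X 0 ω ≤ 2 * M * (2 * M)
          have h := hXabs 0 ω
          nlinarith [abs_nonneg (X 0 ω), abs_mul_abs_self (X 0 ω)]
      _ = 4 * M ^ 2 := by simp; ring
  have hCabs : |C| ≤ ρ / 4 := by
    have ht1i : Integrable (fun ω => FVaux.trunc M (γ N 0 ω) * FVaux.trunc M (γ N 1 ω)) P := by
      refine (integrable_const (M * M)).mono'
        (((htm.comp (hmeas N 0 h0N)).mul (htm.comp (hmeas N 1 h1N))).aestronglyMeasurable) ?_
      filter_upwards with ω
      rw [Real.norm_eq_abs, abs_mul]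
      exact mul_le_mul (htabs _) (htabs _) (abs_nonneg _) hM0
    have hμt0 : Integrable (fun ω => μ * FVaux.trunc M (γ N 0 ω)) P :=
      (hfint N 0 h0N).const_mul μ
    have hμt1 : Integrable (fun ω => μ * FVaux.trunc M (γ N 1 ω)) P :=
      (hfint N 1 h1N).const_mul μ
    have hexp : (fun ω => X 0 ω * X 1 ω) = fun ω =>
        FVaux.trunc M (γ N 0 ω) * FVaux.trunc M (γ N 1 ω)
          - μ * FVaux.trunc M (γ N 0 ω) - μ * FVaux.trunc M (γ N 1 ω) + μ * μ := by
      funext ω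
      simp only [hX]
      ring
    have h1 : ∫ ω, FVaux.trunc M (γ N 1 ω) ∂P = μ := by
      rw [hμdef]
      exact FVaux.int_single P γ hmeas hexch h1N htm
    have hsub2 : Integrable (fun ω => FVaux.trunc M (γ N 0 ω) * FVaux.trunc M (γ N 1 ω)
        - μ * FVaux.trunc M (γ N 0 ω)) P := ht1i.sub hμt0
    have hsub3 : Integrable (fun ω => FVaux.trunc M (γ N 0 ω) * FVaux.trunc M (γ N 1 ω)
        - μ * FVaux.trunc M (γ N 0 ω) - μ * FVaux.trunc M (γ N 1 ω)) P := hsub2.sub hμt1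
    have hCval : C = (∫ ω, FVaux.trunc M (γ N 0 ω) * FVaux.trunc M (γ N 1 ω) ∂P) - μ * μ := by
      rw [hCd, hexp]
      rw [integral_add hsub3 (integrable_const _),
        integral_sub hsub2 hμt1, integral_sub ht1i hμt0,
        integral_const_mul, integral_const_mul, integral_const, h1, ← hμdef]
      simp
    rw [hCval]
    exact hE3
  have hA2le : ∫ ω, A ω * A ω ∂P ≤ ρ / 2 := by
    rw [hA2val]
    have h1 : V / N ≤ 4 * M ^ 2 / N := by gcongr
    have h2 : (((N : ℝ) - 1) / N) * C ≤ |C| := by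
      have hfr0 : 0 ≤ ((N : ℝ) - 1) / N := by
        apply div_nonneg _ hNR.le
        have h5 : (2:ℝ) ≤ N := by exact_mod_cast hN2
        linarith
      have hfr1 : ((N : ℝ) - 1) / N ≤ 1 := by
        rw [div_le_one hNR]
        linarith
      calc (((N : ℝ) - 1) / N) * C ≤ (((N : ℝ) - 1) / N) * |C| :=
            mul_le_mul_of_nonneg_left (le_abs_self C) hfr0
        _ ≤ 1 * |C| := mul_le_mul_of_nonneg_right hfr1 (abs_nonneg _)
        _ = |C| := one_mul _
    linarith [hE4, hCabs]
  have hmarkA := mul_meas_ge_le_integral_of_nonneg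
    (ae_of_all P fun ω => mul_self_nonneg (A ω)) hintA2 ((ε / 3) ^ 2)
  have hPA : (P {ω | ε / 3 ≤ |A ω|}).toReal ≤ θ / 2 := by
    have hset : {ω | ε / 3 ≤ |A ω|} = {ω | (ε / 3) ^ 2 ≤ A ω * A ω} := by
      ext ω
      simp only [Set.mem_setOf_eq]
      constructor
      · intro h
        nlinarith [abs_mul_abs_self (A ω), abs_nonneg (A ω)]
      · intro h
        nlinarith [abs_mul_abs_self (A ω), abs_nonneg (A ω), hε]
    rw [hset]
    have h3 : (0:ℝ) < (ε / 3) ^ 2 := by positivity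
    have hle := le_trans hmarkA hA2le
    have h2 : ρ / 2 = (ε / 3) ^ 2 * (θ / 2) := by rw [hρdef]; ring
    rw [h2] at hle
    exact le_of_mul_le_mul_left hle h3
  have hintB : Integrable B P := by
    simp only [hB, hd]
    exact (integrable_finset_sum _ fun k hk =>
      (hdiffint N k (Finset.mem_range.mp hk)).sub (integrable_const r)).div_const _
  have hBint : ∫ ω, |B ω| ∂P ≤ 2 * δ := by
    have hdint : ∀ k, k < N → Integrable (fun ω => |d k ω|) P := by
      intro k hk
      simp only [hd]
      exact (hdiffint N k hk).abs
    have hrhsint : Integrable (fun ω => (∑ k ∈ Finset.range N, |d k ω|) / N + |r|) P :=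
      ((integrable_finset_sum _ fun k hk => hdint k (Finset.mem_range.mp hk)).div_const _).add
        (integrable_const _)
    have hle : ∀ ω, |B ω| ≤ (∑ k ∈ Finset.range N, |d k ω|) / N + |r| := by
      intro ω
      simp only [hB]
      rw [abs_div, abs_of_pos hNR]
      calc |∑ k ∈ Finset.range N, (d k ω - r)| / N
          ≤ (∑ k ∈ Finset.range N, (|d k ω| + |r|)) / N :=
            (div_le_div_iff_of_pos_right hNR).mpr ((Finset.abs_sum_le_sum_abs _ _).trans
              (Finset.sum_le_sum fun k _ => abs_sub _ _))
        _ = (∑ k ∈ Finset.range N, |d k ω|) / N + |r| := by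
            rw [Finset.sum_add_distrib, Finset.sum_const, Finset.card_range, nsmul_eq_mul,
              add_div, mul_div_cancel_left₀ _ hNR.ne']
    calc ∫ ω, |B ω| ∂P ≤ ∫ ω, ((∑ k ∈ Finset.range N, |d k ω|) / N + |r|) ∂P :=
          integral_mono hintB.abs hrhsint hle
      _ = (∑ k ∈ Finset.range N, ∫ ω, |d k ω| ∂P) / N + |r| := by
          rw [integral_add ((integrable_finset_sum _ fun k hk =>
            hdint k (Finset.mem_range.mp hk)).div_const _) (integrable_const _),
            integral_div, integral_finset_sum _ (fun k hk => hdint k (Finset.mem_range.mp hk)),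
            integral_const]
          simp
      _ ≤ ((N : ℝ) * δ) / N + δ := by
          refine add_le_add ((div_le_div_iff_of_pos_right hNR).mpr ?_) hrabs
          calc ∑ k ∈ Finset.range N, ∫ ω, |d k ω| ∂P ≤ ∑ _k ∈ Finset.range N, δ :=
                Finset.sum_le_sum fun k hk => by
                  simp only [hd]
                  exact hdiffabs N k (Finset.mem_range.mp hk)
            _ = (N : ℝ) * δ := by rw [Finset.sum_const, Finset.card_range, nsmul_eq_mul]
      _ = 2 * δ := by
          rw [mul_div_cancel_left₀ _ hNR.ne']
          ring
  have hmarkB := mul_meas_ge_le_integral_of_nonneg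
    (ae_of_all P fun ω => abs_nonneg (B ω)) hintB.abs (ε / 3)
  have hPB : (P {ω | ε / 3 ≤ |B ω|}).toReal ≤ θ / 4 := by
    have h3 : (0:ℝ) < ε / 3 := by positivity
    have hle := le_trans hmarkB hBint
    have h2 : 2 * δ = (ε / 3) * (θ / 4) := by rw [hδdef]; ring
    rw [h2] at hle
    exact le_of_mul_le_mul_left hle h3
  have hABsum : ∀ ω, A ω + B ω = (∑ k ∈ Finset.range N, γ N k ω) / N - (μ + r) := by
    intro ω
    simp only [hA, hB, hX, hd]
    rw [← add_div, ← Finset.sum_add_distrib]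
    have h1 : ∀ k ∈ Finset.range N,
        (FVaux.trunc M (γ N k ω) - μ + (γ N k ω - FVaux.trunc M (γ N k ω) - r))
          = γ N k ω - (μ + r) := fun k _ => by ring
    rw [Finset.sum_congr rfl h1, Finset.sum_sub_distrib, Finset.sum_const,
      Finset.card_range, nsmul_eq_mul, sub_div, mul_div_cancel_left₀ _ hNR.ne']
  have hsub : {ω | ε < |(∑ k ∈ Finset.range N, γ N k ω) / N - m|}
      ⊆ {ω | ε / 3 ≤ |A ω|} ∪ {ω | ε / 3 ≤ |B ω|} := by
    intro ω hω
    simp only [Set.mem_setOf_eq, Set.mem_union] at hω ⊢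
    by_contra hcon
    push_neg at hcon
    obtain ⟨h1, h2⟩ := hcon
    have hid : (∑ k ∈ Finset.range N, γ N k ω) / N - m = A ω + B ω + (μ + r - m) := by
      rw [hABsum ω]; ring
    rw [hid] at hω
    have h4 := abs_add_le (A ω + B ω) (μ + r - m)
    have h5 := abs_add_le (A ω) (B ω)
    linarith [ham]
  calc P {ω | ε < |(∑ k ∈ Finset.range N, γ N k ω) / N - m|}
      ≤ P ({ω | ε / 3 ≤ |A ω|} ∪ {ω | ε / 3 ≤ |B ω|}) := measure_mono hsub
    _ ≤ P {ω | ε / 3 ≤ |A ω|} + P {ω | ε / 3 ≤ |B ω|} := measure_union_le _ _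
    _ ≤ ENNReal.ofReal (θ / 2) + ENNReal.ofReal (θ / 4) := by
        refine add_le_add ?_ ?_
        · exact (ENNReal.le_ofReal_iff_toReal_le (measure_ne_top P _) (by positivity)).mpr hPA
        · exact (ENNReal.le_ofReal_iff_toReal_le (measure_ne_top P _) (by positivity)).mpr hPB
    _ ≤ η := by
        rw [← ENNReal.ofReal_add (by positivity) (by positivity)]
        calc ENNReal.ofReal (θ / 2 + θ / 4) ≤ ENNReal.ofReal θ :=
              ENNReal.ofReal_le_ofReal (by linarith)
          _ = η' := hofθ
          _ ≤ η := hη'le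
end
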